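/- For all real numbers a > 0 and b > 0, ∫_0^∞ (e^{-bx} - 1/(1+ax)) dx/x = ln(a/b) - γ. -/

import Mathlib

open MeasureTheory Real Set Filter Topology

lemma integral_exp_neg_log : ∫ t in Set.Ioi (0:ℝ), Real.exp (-t) * Real.log t
    = -Real.eulerMascheroniConstant := by
  -- complex Gamma derivative at 1
  have h1 := Complex.hasDerivAt_GammaIntegral (s := 1) (by norm_num)
  set J : ℝ := ∫ t in Set.Ioi (0:ℝ), Real.exp (-t) * Real.log t with hJ
  have hval : (∫ t : ℝ in Set.Ioi 0, (t:ℂ) ^ ((1:ℂ) - 1) * (Real.log t * Real.exp (-t)))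
      = (J : ℂ) := by
    rw [hJ]
    calc (∫ t : ℝ in Set.Ioi 0, (t:ℂ) ^ ((1:ℂ) - 1) * (Real.log t * Real.exp (-t)))
        = ∫ t : ℝ in Set.Ioi 0, ((Real.exp (-t) * Real.log t : ℝ) : ℂ) := by
          refine setIntegral_congr_fun measurableSet_Ioi (fun t ht => ?_)
          push_cast
          rw [sub_self, Complex.cpow_zero]
          ring
      _ = _ := integral_ofReal
  rw [hval] at h1
  have h2 : HasDerivAt Complex.Gamma (J:ℂ) 1 := by
    refine h1.congr_of_eventuallyEq ?_
    have hopen : IsOpen {s : ℂ | 0 < s.re} := isOpen_lt continuous_const Complex.continuous_re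
    filter_upwards [hopen.mem_nhds (by norm_num : (0:ℝ) < (1:ℂ).re)] with s hs
    exact Complex.Gamma_eq_integral hs
  have h3 : HasDerivAt Real.Gamma ((J:ℂ)).re 1 := by
    have := h2.real_of_complex
    refine this.congr_of_eventuallyEq ?_
    filter_upwards with x
    rw [Complex.Gamma_ofReal, Complex.ofReal_re]
  have h4 := Real.hasDerivAt_Gamma_one
  have := h3.unique h4
  simpa using this

noncomputable def E1 (y : ℝ) : ℝ := ∫ t in Set.Ioi y, Real.exp (-t) / t

lemma integrableOn_E1 {y : ℝ} (hy : 0 < y) :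
    IntegrableOn (fun t => Real.exp (-t) / t) (Set.Ioi y) := by
  have hint : IntegrableOn (fun t => Real.exp (-t) / y) (Set.Ioi y) := by
    have := (exp_neg_integrableOn_Ioi y (by norm_num : (0:ℝ) < 1))
    simpa [div_eq_mul_inv, one_mul, IntegrableOn] using this.mul_const (y⁻¹)
  refine hint.mono' ?_ ?_
  · exact ((measurable_exp.comp measurable_neg).div measurable_id).aestronglyMeasurable
  · filter_upwards [ae_restrict_mem measurableSet_Ioi] with t ht
    have ht' : 0 < t := lt_trans hy ht
    rw [Real.norm_eq_abs, abs_of_nonneg (div_nonneg (Real.exp_pos _).le ht'.le)]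
    exact div_le_div_of_nonneg_left (Real.exp_pos _).le hy ht.le

lemma E1_split {y z : ℝ} (hy : 0 < y) (hyz : y ≤ z) :
    E1 y = (∫ t in Set.Ioc y z, Real.exp (-t) / t) + E1 z := by
  have hz : 0 < z := lt_of_lt_of_le hy hyz
  rw [E1, E1, ← Set.Ioc_union_Ioi_eq_Ioi hyz,
    setIntegral_union (Set.Ioc_disjoint_Ioi le_rfl) measurableSet_Ioi
      ((integrableOn_E1 hy).mono_set Set.Ioc_subset_Ioi_self) (integrableOn_E1 hz)]

lemma E1_nonneg {y : ℝ} (hy : 0 < y) : 0 ≤ E1 y := by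
  refine setIntegral_nonneg measurableSet_Ioi (fun t ht => ?_)
  have : 0 < t := lt_trans hy ht
  positivity

lemma E1_tendsto_atTop : Tendsto E1 atTop (𝓝 0) := by
  have h1 : ∀ᶠ y in atTop, E1 y ≤ Real.exp (-y) := by
    filter_upwards [eventually_ge_atTop (1:ℝ)] with y hy
    calc E1 y ≤ ∫ t in Set.Ioi y, Real.exp (-t) := by
          refine setIntegral_mono_on (integrableOn_E1 (by linarith)) ?_ measurableSet_Ioi ?_
          · exact (exp_neg_integrableOn_Ioi y (by norm_num : (0:ℝ) < 1)).congr_fun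
              (fun t _ => by norm_num) measurableSet_Ioi
          · intro t ht
            rw [div_le_iff₀ (by linarith [ht.out] : (0:ℝ) < t)]
            nlinarith [Real.exp_pos (-t), ht.out, hy]
      _ = Real.exp (-y) := integral_exp_neg_Ioi y
  have h0 : ∀ᶠ y in atTop, 0 ≤ E1 y := by
    filter_upwards [eventually_gt_atTop (0:ℝ)] with y hy using E1_nonneg hy
  exact tendsto_of_tendsto_of_tendsto_of_le_of_le' tendsto_const_nhds
    (by simpa using Real.tendsto_exp_neg_atTop_nhds_zero) h0 h1

lemma hasDerivAt_E1 {y : ℝ} (hy : 0 < y) : HasDerivAt E1 (-(Real.exp (-y) / y)) y := by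
  set c := y / 2 with hc
  have hc0 : 0 < c := by positivity
  have hcy : c < y := by rw [hc]; linarith
  have key : ∀ᶠ z in 𝓝 y, E1 z = E1 c - ∫ t in c..z, Real.exp (-t) / t := by
    filter_upwards [eventually_gt_nhds hcy] with z hz
    rw [intervalIntegral.integral_of_le hz.le, E1_split hc0 hz.le]
    ring
  have hderiv : HasDerivAt (fun z => E1 c - ∫ t in c..z, Real.exp (-t) / t)
      (-(Real.exp (-y) / y)) y := by
    have hFTC : HasDerivAt (fun z => ∫ t in c..z, Real.exp (-t) / t)
        (Real.exp (-y) / y) y := by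
      refine intervalIntegral.integral_hasDerivAt_right ?_ ?_ ?_
      · rw [intervalIntegrable_iff, Set.uIoc_of_le hcy.le]
        exact (integrableOn_E1 hc0).mono_set Set.Ioc_subset_Ioi_self
      · exact ⟨Set.univ, Filter.univ_mem,
          (((measurable_exp.comp measurable_neg).div measurable_id).aestronglyMeasurable)⟩
      · exact ContinuousAt.div ((Real.continuous_exp.comp continuous_neg).continuousAt)
          continuousAt_id hy.ne'
    have := (hasDerivAt_const y (E1 c)).sub hFTC; rw [zero_sub] at this; exact this
  exact hderiv.congr_of_eventuallyEq key

lemma neg_log_le_two_rpow {t : ℝ} (ht : 0 < t) : -Real.log t ≤ 2 * t ^ (-(1/2) : ℝ) := by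
  have h1 : Real.log (t ^ (-(1/2) : ℝ)) = -(1/2) * Real.log t := Real.log_rpow ht _
  have h2 : Real.log (t ^ (-(1/2) : ℝ)) ≤ t ^ (-(1/2) : ℝ) - 1 :=
    Real.log_le_sub_one_of_pos (Real.rpow_pos_of_pos ht _)
  nlinarith [Real.rpow_pos_of_pos ht (-(1/2) : ℝ)]

lemma one_sub_exp_neg_le (t : ℝ) : 1 - Real.exp (-t) ≤ t := by
  have := Real.add_one_le_exp (-t); linarith

lemma integrableOn_exp_neg_mul_log : IntegrableOn (fun t => Real.exp (-t) * Real.log t) (Set.Ioi (0:ℝ)) := by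
  have h1 : IntegrableOn (fun t => Real.exp (-t) * t ^ ((1/2 : ℝ) - 1)) (Set.Ioi (0:ℝ)) :=
    Real.GammaIntegral_convergent (by norm_num)
  have h2 : IntegrableOn (fun t => Real.exp (-t) * t ^ ((2:ℝ) - 1)) (Set.Ioi (0:ℝ)) :=
    Real.GammaIntegral_convergent (by norm_num)
  have hg : IntegrableOn (fun t => 2 * (Real.exp (-t) * t ^ ((1/2:ℝ) - 1))
      + Real.exp (-t) * t ^ ((2:ℝ) - 1)) (Set.Ioi (0:ℝ)) := (h1.const_mul 2).add h2
  refine hg.mono' ?_ ?_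
  · exact ((measurable_exp.comp measurable_neg).mul measurable_log).aestronglyMeasurable
  · filter_upwards [ae_restrict_mem measurableSet_Ioi] with t ht
    have ht' : (0:ℝ) < t := ht
    have hex := Real.exp_pos (-t)
    rw [Real.norm_eq_abs, abs_mul, abs_of_pos hex]
    have hr1 : (0:ℝ) < t ^ ((1/2:ℝ) - 1) := Real.rpow_pos_of_pos ht' _
    have hr2 : (0:ℝ) < t ^ ((2:ℝ) - 1) := Real.rpow_pos_of_pos ht' _
    rcases le_total t 1 with h | h
    · have : |Real.log t| = -Real.log t := abs_of_nonpos (Real.log_nonpos ht'.le h)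
      rw [this]
      have hn := neg_log_le_two_rpow ht'
      rw [show ((1/2:ℝ) - 1) = (-(1/2):ℝ) by norm_num]
      have h5 : Real.exp (-t) * -Real.log t ≤ Real.exp (-t) * (2 * t ^ (-(1/2):ℝ)) :=
        mul_le_mul_of_nonneg_left hn hex.le
      have h6 : Real.exp (-t) * (2 * t ^ (-(1/2):ℝ)) = 2 * (Real.exp (-t) * t ^ (-(1/2):ℝ)) := by
        ring
      have h7 := mul_pos hex hr2
      rw [h6] at h5
      set A := Real.exp (-t) * -Real.log t
      set B := 2 * (Real.exp (-t) * t ^ (-(1/2):ℝ))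
      set C := Real.exp (-t) * t ^ ((2:ℝ) - 1)
      linarith
    · have : |Real.log t| = Real.log t := abs_of_nonneg (Real.log_nonneg h)
      rw [this]
      have hlt : Real.log t ≤ t := (Real.log_le_sub_one_of_pos ht').trans (by linarith)
      have ht21 : t ^ ((2:ℝ) - 1) = t := by
        rw [show (2:ℝ) - 1 = 1 by norm_num, Real.rpow_one]
      rw [ht21]
      have h5 : Real.exp (-t) * Real.log t ≤ Real.exp (-t) * t :=
        mul_le_mul_of_nonneg_left hlt hex.le
      have h7 := mul_pos hex hr1
      set A := Real.exp (-t) * Real.log t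
      set B := Real.exp (-t) * t ^ ((1/2:ℝ) - 1)
      set C := Real.exp (-t) * t
      linarith

lemma integrableOn_one_sub_exp_div : IntegrableOn (fun t => (1 - Real.exp (-t)) / t) (Set.Ioc (0:ℝ) 1) := by
  have hconst : IntegrableOn (fun _ : ℝ => (1:ℝ)) (Set.Ioc (0:ℝ) 1) :=
    integrableOn_const measure_Ioc_lt_top.ne
  refine hconst.mono' ?_ ?_
  · exact (((measurable_const.sub (measurable_exp.comp measurable_neg))).div measurable_id).aestronglyMeasurable
  · filter_upwards [ae_restrict_mem measurableSet_Ioc] with t ht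
    have ht0 : 0 < t := ht.1
    have h1 : 0 ≤ 1 - Real.exp (-t) := by
      have : Real.exp (-t) ≤ Real.exp 0 := Real.exp_le_exp.mpr (by linarith)
      simpa using this
    rw [Real.norm_eq_abs, abs_of_nonneg (div_nonneg h1 ht0.le), div_le_one ht0]
    exact one_sub_exp_neg_le t

lemma IBP1 : ∫ t in Set.Ioc (0:ℝ) 1, Real.exp (-t) * Real.log t
    = -∫ t in Set.Ioc (0:ℝ) 1, (1 - Real.exp (-t)) / t := by
  set f : ℝ → ℝ := fun t => (1 - Real.exp (-t)) * Real.log t with hf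
  have hexp : ∀ x : ℝ, HasDerivAt (fun t => Real.exp (-t)) (-Real.exp (-x)) x := by
    intro x
    simpa [Function.comp_def] using (Real.hasDerivAt_exp (-x)).comp x ((hasDerivAt_id x).neg)
  have hderiv : ∀ x ∈ Set.Ioo (0:ℝ) 1,
      HasDerivAt f (Real.exp (-x) * Real.log x + (1 - Real.exp (-x)) / x) x := by
    intro x hx
    have h1 : HasDerivAt (fun t => 1 - Real.exp (-t)) (Real.exp (-x)) x := by
      simpa [Pi.sub_def] using (hasDerivAt_const x (1:ℝ)).sub (hexp x)
    have h2 : HasDerivAt Real.log x⁻¹ x := Real.hasDerivAt_log hx.1.ne'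
    simpa [div_eq_mul_inv, Pi.mul_def] using h1.mul h2
  have hcont : ContinuousOn f (Set.Icc 0 1) := by
    intro x hx
    rcases eq_or_ne x 0 with rfl | hx0
    · have hf0 : f 0 = 0 := by simp [hf]
      rw [ContinuousWithinAt, hf0]
      have hbound : ∀ t ∈ Set.Icc (0:ℝ) 1, ‖f t‖ ≤ 2 * t ^ ((1/2:ℝ)) := by
        intro t ht
        rcases eq_or_lt_of_le ht.1 with rfl | ht0
        · simp [hf]
        · have h1 : |1 - Real.exp (-t)| ≤ t := by
            rw [abs_of_nonneg (by
              have : Real.exp (-t) ≤ Real.exp 0 := Real.exp_le_exp.mpr (by linarith)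
              simpa using this)]
            exact one_sub_exp_neg_le t
          have h2 : |Real.log t| ≤ 2 * t ^ (-(1/2):ℝ) := by
            rw [abs_of_nonpos (Real.log_nonpos ht0.le ht.2)]
            exact neg_log_le_two_rpow ht0
          calc ‖f t‖ = |1 - Real.exp (-t)| * |Real.log t| := abs_mul _ _
            _ ≤ t * (2 * t ^ (-(1/2):ℝ)) := by
                refine mul_le_mul h1 h2 (abs_nonneg _) ht0.le
            _ = 2 * (t ^ (1:ℝ) * t ^ (-(1/2):ℝ)) := by rw [Real.rpow_one]; ring
            _ = 2 * t ^ ((1/2:ℝ)) := by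
                rw [← Real.rpow_add ht0]; norm_num
      have hg : Tendsto (fun t : ℝ => 2 * t ^ ((1/2:ℝ))) (𝓝[Set.Icc 0 1] 0) (𝓝 0) := by
        have hc : ContinuousWithinAt (fun t : ℝ => 2 * t ^ ((1/2:ℝ))) (Set.Icc 0 1) 0 :=
          (continuousAt_const.mul
            (Real.continuousAt_rpow_const 0 _ (Or.inr (by norm_num)))).continuousWithinAt
        simpa [ContinuousWithinAt, Real.zero_rpow (show (1/2:ℝ) ≠ 0 by norm_num)] using hc
      refine squeeze_zero_norm' ?_ hg
      filter_upwards [self_mem_nhdsWithin] with t ht using hbound t ht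
    · have : ContinuousAt f x := by
        exact ((continuous_const.sub (Real.continuous_exp.comp continuous_neg)).continuousAt).mul
          (Real.continuousAt_log hx0)
      exact this.continuousWithinAt
  have hint : IntervalIntegrable
      (fun t => Real.exp (-t) * Real.log t + (1 - Real.exp (-t)) / t) volume 0 1 := by
    rw [intervalIntegrable_iff, Set.uIoc_of_le zero_le_one]
    exact (integrableOn_exp_neg_mul_log.mono_set
      (fun t ht => ht.1)).add integrableOn_one_sub_exp_div
  have key := intervalIntegral.integral_eq_sub_of_hasDeriv_right_of_le zero_le_one hcont
    (fun x hx => (hderiv x hx).hasDerivWithinAt) hint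
  have hf1 : f 1 = 0 := by simp [hf]
  have hf0 : f 0 = 0 := by simp [hf]
  rw [hf1, hf0, sub_zero, intervalIntegral.integral_of_le zero_le_one] at key
  have hsplit := integral_add (μ := volume.restrict (Set.Ioc (0:ℝ) 1))
    (integrableOn_exp_neg_mul_log.mono_set (fun t ht => ht.1)) integrableOn_one_sub_exp_div
  rw [hsplit] at key
  linarith [key]

lemma IBP2 : ∫ t in Set.Ioi (1:ℝ), Real.exp (-t) * Real.log t
    = ∫ t in Set.Ioi (1:ℝ), Real.exp (-t) / t := by
  set f : ℝ → ℝ := fun t => -(Real.exp (-t) * Real.log t) with hf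
  have hexp : ∀ x : ℝ, HasDerivAt (fun t => Real.exp (-t)) (-Real.exp (-x)) x := by
    intro x
    simpa [Function.comp_def] using (Real.hasDerivAt_exp (-x)).comp x ((hasDerivAt_id x).neg)
  have hderiv : ∀ x ∈ Set.Ioi (1:ℝ),
      HasDerivAt f (Real.exp (-x) * Real.log x - Real.exp (-x) / x) x := by
    intro x hx
    have hx0 : (0:ℝ) < x := lt_trans one_pos hx
    have h2 : HasDerivAt Real.log x⁻¹ x := Real.hasDerivAt_log hx0.ne'
    have := ((hexp x).mul h2).neg
    simp only [Pi.mul_def, Pi.neg_def] at this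
    exact this.congr_deriv (by ring)
  have hcont : ContinuousWithinAt f (Set.Ici (1:ℝ)) 1 := by
    refine ContinuousAt.continuousWithinAt ?_
    exact (((Real.continuous_exp.comp continuous_neg).continuousAt).mul
      (Real.continuousAt_log one_ne_zero)).neg
  have hconv : IntegrableOn (fun x => Real.exp (-x) * Real.log x - Real.exp (-x) / x)
      (Set.Ioi (1:ℝ)) :=
    (integrableOn_exp_neg_mul_log.mono_set (fun t ht => show (0:ℝ) < t from lt_trans one_pos ht)).sub
      (integrableOn_E1 one_pos)
  have htend : Tendsto f atTop (𝓝 0) := by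
    refine squeeze_zero_norm' (a := fun t => t ^ (1:ℝ) * Real.exp (-1 * t)) ?_ ?_
    · filter_upwards [eventually_ge_atTop (1:ℝ)] with t ht
      have ht0 : (0:ℝ) < t := lt_of_lt_of_le one_pos ht
      have hlog : |Real.log t| ≤ t := by
        rw [abs_of_nonneg (Real.log_nonneg ht)]
        exact (Real.log_le_sub_one_of_pos ht0).trans (by linarith)
      calc ‖f t‖ = Real.exp (-t) * |Real.log t| := by
            rw [hf, norm_neg, Real.norm_eq_abs, abs_mul, abs_of_pos (Real.exp_pos _)]
        _ ≤ Real.exp (-t) * t := mul_le_mul_of_nonneg_left hlog (Real.exp_pos _).le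
        _ = t ^ (1:ℝ) * Real.exp (-1 * t) := by rw [Real.rpow_one]; ring_nf
    · simpa using tendsto_rpow_mul_exp_neg_mul_atTop_nhds_zero 1 1 one_pos
  have key := integral_Ioi_of_hasDerivAt_of_tendsto hcont hderiv hconv htend
  have hf1 : f 1 = 0 := by simp [hf]
  rw [hf1, sub_zero] at key
  have hsplit := integral_sub (μ := volume.restrict (Set.Ioi (1:ℝ)))
    (integrableOn_exp_neg_mul_log.mono_set (fun t ht => show (0:ℝ) < t from lt_trans one_pos ht))
    (integrableOn_E1 one_pos)
  rw [hsplit] at key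
  linarith [key]

lemma const_eq_neg_gamma : E1 1 - (∫ t in Set.Ioc (0:ℝ) 1, (1 - Real.exp (-t)) / t)
    = -Real.eulerMascheroniConstant := by
  have hsplit : ∫ t in Set.Ioi (0:ℝ), Real.exp (-t) * Real.log t
      = (∫ t in Set.Ioc (0:ℝ) 1, Real.exp (-t) * Real.log t)
        + ∫ t in Set.Ioi (1:ℝ), Real.exp (-t) * Real.log t := by
    rw [← setIntegral_union (Set.Ioc_disjoint_Ioi le_rfl) measurableSet_Ioi
      (integrableOn_exp_neg_mul_log.mono_set (fun t ht => ht.1))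
      (integrableOn_exp_neg_mul_log.mono_set (fun t ht => show (0:ℝ) < t from lt_trans one_pos ht)),
      Set.Ioc_union_Ioi_eq_Ioi zero_le_one]
  have := integral_exp_neg_log
  rw [hsplit, IBP1, IBP2] at this
  rw [E1]
  linarith

lemma E1_add_log_tendsto :
    Tendsto (fun y => E1 y + Real.log y) (𝓝[>] (0:ℝ)) (𝓝 (-Real.eulerMascheroniConstant)) := by
  have hG : IntegrableOn (fun t => (1 - Real.exp (-t)) / t) (Set.Ioc (0:ℝ) 1) :=
    integrableOn_one_sub_exp_div
  have key : ∀ y ∈ Set.Ioo (0:ℝ) 1, (E1 y + Real.log y) - (-Real.eulerMascheroniConstant)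
      = ∫ t in Set.Ioc (0:ℝ) y, (1 - Real.exp (-t)) / t := by
    intro y hy
    have hy0 : 0 < y := hy.1
    have hy1 : y ≤ 1 := hy.2.le
    have h1 : E1 y = (∫ t in Set.Ioc y 1, Real.exp (-t) / t) + E1 1 := E1_split hy0 hy1
    have h2 : Real.log y = -∫ t in Set.Ioc y 1, t⁻¹ := by
      rw [← intervalIntegral.integral_of_le hy1, integral_inv_of_pos hy0 one_pos]
      rw [Real.log_div one_ne_zero hy0.ne', Real.log_one]
      ring
    have h3 : (∫ t in Set.Ioc y 1, Real.exp (-t) / t) - (∫ t in Set.Ioc y 1, t⁻¹)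
        = -∫ t in Set.Ioc y 1, (1 - Real.exp (-t)) / t := by
      have hi1 : IntegrableOn (fun t => Real.exp (-t) / t) (Set.Ioc y 1) :=
        (integrableOn_E1 hy0).mono_set Set.Ioc_subset_Ioi_self
      have hi2 : IntegrableOn (fun t : ℝ => t⁻¹) (Set.Ioc y 1) := by
        have : IntervalIntegrable (fun t : ℝ => t⁻¹) volume y 1 :=
          intervalIntegral.intervalIntegrable_inv (fun t ht => by
            rw [Set.uIcc_of_le hy1] at ht
            exact (lt_of_lt_of_le hy0 ht.1).ne') continuousOn_id
        rwa [intervalIntegrable_iff, Set.uIoc_of_le hy1] at this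
      rw [← integral_sub hi1 hi2, ← integral_neg]
      refine setIntegral_congr_fun measurableSet_Ioc (fun t ht => ?_)
      have ht0 : 0 < t := lt_trans hy0 ht.1
      field_simp
      ring
    have h4 : (∫ t in Set.Ioc (0:ℝ) 1, (1 - Real.exp (-t)) / t)
        = (∫ t in Set.Ioc (0:ℝ) y, (1 - Real.exp (-t)) / t)
          + ∫ t in Set.Ioc y 1, (1 - Real.exp (-t)) / t := by
      rw [← setIntegral_union (Set.Ioc_disjoint_Ioc.mpr (le_trans inf_le_left le_sup_right))
        measurableSet_Ioc
        (hG.mono_set (Set.Ioc_subset_Ioc le_rfl hy1))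
        (hG.mono_set (Set.Ioc_subset_Ioc hy0.le le_rfl)),
        Set.Ioc_union_Ioc_eq_Ioc hy0.le hy1]
    have hc := const_eq_neg_gamma
    rw [h1, h2]
    have : (∫ t in Set.Ioc y 1, Real.exp (-t) / t) + E1 1 + -(∫ t in Set.Ioc y 1, t⁻¹)
        = E1 1 - ∫ t in Set.Ioc y 1, (1 - Real.exp (-t)) / t := by linarith [h3]
    rw [this]
    linarith [h4, hc]
  have hbound : ∀ᶠ y in 𝓝[>] (0:ℝ),
      ‖(fun y => E1 y + Real.log y) y - (-Real.eulerMascheroniConstant)‖ ≤ y := by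
    filter_upwards [Ioo_mem_nhdsGT_of_mem (Set.mem_Ico.mpr ⟨le_rfl, zero_lt_one⟩)] with y hy
    rw [key y hy]
    have : ‖∫ t in Set.Ioc (0:ℝ) y, (1 - Real.exp (-t)) / t‖ ≤ 1 * (volume (Set.Ioc (0:ℝ) y)).toReal := by
      refine norm_setIntegral_le_of_norm_le_const measure_Ioc_lt_top ?_
      intro t ht
      have ht0 : 0 < t := ht.1
      rw [Real.norm_eq_abs, abs_of_nonneg (div_nonneg (by
        have : Real.exp (-t) ≤ Real.exp 0 := Real.exp_le_exp.mpr (by linarith)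
        simpa using this) ht0.le)]
      rw [div_le_one ht0]
      exact one_sub_exp_neg_le t
    simpa [Real.volume_Ioc, ENNReal.toReal_ofReal hy.1.le] using this
  have htendy : Tendsto (fun y : ℝ => y) (𝓝[>] (0:ℝ)) (𝓝 0) :=
    tendsto_id.mono_left nhdsWithin_le_nhds
  have := squeeze_zero_norm' hbound htendy
  exact tendsto_sub_nhds_zero_iff.mp (by simpa using this)

set_option maxHeartbeats 1000000 in
theorem integral_exp_sub_inv_one_add_mul_div (a b : ℝ) (ha : 0 < a) (hb : 0 < b) :
    ∫ x in Set.Ioi (0 : ℝ), (Real.exp (-(b * x)) - 1 / (1 + a * x)) / x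
      = Real.log (a / b) - Real.eulerMascheroniConstant := by
  set γ := Real.eulerMascheroniConstant with hγ
  set g : ℝ → ℝ := fun x => Real.log (1 + a * x) - Real.log x - E1 (b * x) with hg
  set f : ℝ → ℝ := fun x => if x = 0 then Real.log b + γ else g x with hfdef
  have hax : ∀ x : ℝ, 0 < x → 0 < 1 + a * x := fun x hx => by nlinarith
  -- derivative
  have hderiv : ∀ x ∈ Set.Ioi (0:ℝ),
      HasDerivAt f ((Real.exp (-(b * x)) - 1 / (1 + a * x)) / x) x := by
    intro x hx
    have hx0 : (0:ℝ) < x := hx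
    have h1 : HasDerivAt (fun x => Real.log (1 + a * x)) (a / (1 + a * x)) x := by
      have hin : HasDerivAt (fun x : ℝ => 1 + a * x) a x := by
        simpa using ((hasDerivAt_id x).const_mul a).const_add 1
      simpa using hin.log (hax x hx0).ne'
    have h2 : HasDerivAt Real.log x⁻¹ x := Real.hasDerivAt_log hx0.ne'
    have h3 : HasDerivAt (fun x => E1 (b * x)) (-(Real.exp (-(b * x)) / (b * x)) * b) x := by
      have hbx : HasDerivAt (fun x : ℝ => b * x) b x := by
        simpa using (hasDerivAt_id x).const_mul b
      exact (hasDerivAt_E1 (by positivity)).comp x hbx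
    have hgd : HasDerivAt g (a / (1 + a * x) - x⁻¹ - (-(Real.exp (-(b * x)) / (b * x)) * b)) x :=
      (h1.sub h2).sub h3
    have heq : a / (1 + a * x) - x⁻¹ - (-(Real.exp (-(b * x)) / (b * x)) * b)
        = (Real.exp (-(b * x)) - 1 / (1 + a * x)) / x := by
      field_simp
      ring
    rw [heq] at hgd
    refine hgd.congr_of_eventuallyEq ?_
    filter_upwards [eventually_gt_nhds hx0] with z hz
    rw [hfdef]
    simp only [hz.ne', if_false]
  -- continuity at 0 from the right
  have hcont : ContinuousWithinAt f (Set.Ici (0:ℝ)) 0 := by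
    rw [ContinuousWithinAt]
    have hf0 : f 0 = Real.log b + γ := by simp [hfdef]
    rw [hf0]
    have : Set.Ici (0:ℝ) = {0} ∪ Set.Ioi 0 := by
      ext z; simp [le_iff_lt_or_eq, Set.mem_Ioi, or_comm, eq_comm]
    rw [this, nhdsWithin_union]
    rw [tendsto_sup]
    constructor
    · refine Tendsto.congr' ?_ tendsto_const_nhds
      filter_upwards [self_mem_nhdsWithin] with z hz
      rw [Set.mem_singleton_iff] at hz
      simp [hfdef, hz]
    · have hmain : Tendsto g (𝓝[>] (0:ℝ)) (𝓝 (Real.log b + γ)) := by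
        have hE : Tendsto (fun x => E1 (b * x) + Real.log (b * x)) (𝓝[>] (0:ℝ)) (𝓝 (-γ)) := by
          refine (E1_add_log_tendsto).comp ?_
          refine tendsto_nhdsWithin_of_tendsto_nhds_of_eventually_within _ ?_ ?_
          · have : Tendsto (fun x : ℝ => b * x) (𝓝 0) (𝓝 (b * 0)) :=
              (continuous_const.mul continuous_id).tendsto 0
            simpa using this.mono_left nhdsWithin_le_nhds
          · filter_upwards [self_mem_nhdsWithin] with z hz
            exact Set.mem_Ioi.mpr (mul_pos hb hz)
        have hL : Tendsto (fun x => Real.log (1 + a * x)) (𝓝[>] (0:ℝ)) (𝓝 0) := by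
          have : ContinuousAt (fun x : ℝ => Real.log (1 + a * x)) 0 := by
            refine (Real.continuousAt_log (by norm_num)).comp ?_
            exact (continuous_const.add (continuous_const.mul continuous_id)).continuousAt
          have h0 : Real.log (1 + a * 0) = 0 := by norm_num
          have hw := this.continuousWithinAt (s := Set.Ioi (0:ℝ))
          simpa [ContinuousWithinAt, h0] using hw
        have hcomb : Tendsto (fun x => Real.log (1 + a * x)
            - (E1 (b * x) + Real.log (b * x)) - Real.log b) (𝓝[>] (0:ℝ))
            (𝓝 (0 - (-γ) - Real.log b)) := (hL.sub hE).sub tendsto_const_nhds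
        have : Tendsto (fun x => Real.log (1 + a * x)
            - (E1 (b * x) + Real.log (b * x)) + Real.log b) (𝓝[>] (0:ℝ))
            (𝓝 (0 - (-γ) + Real.log b)) := (hL.sub hE).add tendsto_const_nhds
        refine (this.congr' ?_).mono_right (by rw [show 0 - (-γ) + Real.log b = Real.log b + γ by ring])
        filter_upwards [self_mem_nhdsWithin] with z hz
        have hz0 : (0:ℝ) < z := hz
        rw [hg]
        rw [Real.log_mul hb.ne' hz0.ne']
        ring
      refine hmain.congr' ?_
      filter_upwards [self_mem_nhdsWithin] with z hz
      have hz0 : (0:ℝ) < z := hz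
      simp [hfdef, hz0.ne']
  -- integrability
  have hint : IntegrableOn (fun x => (Real.exp (-(b * x)) - 1 / (1 + a * x)) / x)
      (Set.Ioi (0:ℝ)) := by
    have hmeas0 : Measurable (fun x => (Real.exp (-(b * x)) - 1 / (1 + a * x)) / x) :=
      ((measurable_exp.comp (measurable_const_mul b).neg).sub
        (measurable_const.div ((measurable_const_mul a).const_add 1))).div measurable_id
    have hbd : ∀ x : ℝ, 0 < x → |(Real.exp (-(b * x)) - 1 / (1 + a * x)) / x| ≤
        (1 - Real.exp (-(b*x)))/x + (1 - 1/(1 + a*x))/x := by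
      intro x hx
      have h1 : 0 ≤ 1 - Real.exp (-(b*x)) := by
        have : Real.exp (-(b*x)) ≤ Real.exp 0 := Real.exp_le_exp.mpr (by nlinarith)
        simpa using this
      have hax' := hax x hx
      have h2 : 1 / (1 + a*x) ≤ 1 := by rw [div_le_one hax']; nlinarith
      have h3 : 0 < 1 / (1 + a*x) := by positivity
      rw [abs_div, abs_of_pos hx, ← add_div, div_le_div_iff_of_pos_right hx]
      rw [abs_le]
      constructor <;> nlinarith [Real.exp_pos (-(b*x)), Real.exp_le_exp.mpr (show -(b*x) ≤ 0 by nlinarith), Real.exp_zero]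
    rw [show Set.Ioi (0:ℝ) = Set.Ioc 0 1 ∪ Set.Ioi 1 from (Set.Ioc_union_Ioi_eq_Ioi zero_le_one).symm]
    refine MeasureTheory.IntegrableOn.union ?_ ?_
    · have hconst : IntegrableOn (fun _ : ℝ => b + a) (Set.Ioc (0:ℝ) 1) :=
        integrableOn_const measure_Ioc_lt_top.ne
      refine hconst.mono' hmeas0.aestronglyMeasurable ?_
      filter_upwards [ae_restrict_mem measurableSet_Ioc] with x hx
      have hx0 : 0 < x := hx.1
      have hax' := hax x hx0
      rw [Real.norm_eq_abs]
      refine (hbd x hx0).trans ?_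
      have e1 : (1 - Real.exp (-(b*x)))/x ≤ b := by
        rw [div_le_iff₀ hx0]
        have := one_sub_exp_neg_le (b*x)
        nlinarith
      have e2 : (1 - 1/(1 + a*x))/x ≤ a := by
        have h4 : 1 - a*x ≤ 1/(1 + a*x) := by
          rw [le_div_iff₀ hax']
          nlinarith [sq_nonneg (a*x)]
        rw [div_le_iff₀ hx0]
        linarith
      linarith
    · have hexpint : IntegrableOn (fun x : ℝ => Real.exp (-(b*x))) (Set.Ioi (1:ℝ)) :=
        (exp_neg_integrableOn_Ioi 1 hb).congr_fun (fun x _ => by simp only [neg_mul]) measurableSet_Ioi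
      have hg2 : IntegrableOn (fun x : ℝ => Real.exp (-(b*x)) + (1/a) * x ^ (-2:ℝ))
          (Set.Ioi (1:ℝ)) :=
        hexpint.add
          ((integrableOn_Ioi_rpow_of_lt (by norm_num) one_pos).const_mul (1/a))
      refine hg2.mono' hmeas0.aestronglyMeasurable ?_
      filter_upwards [ae_restrict_mem measurableSet_Ioi] with x hx
      have hx1 : (1:ℝ) < x := hx
      have hx0 : (0:ℝ) < x := lt_trans one_pos hx1
      have hax' := hax x hx0
      rw [Real.norm_eq_abs]
      have hiv : (0:ℝ) < 1 / (1 + a*x) := by positivity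
      have habs : |Real.exp (-(b*x)) - 1/(1+a*x)| ≤ Real.exp (-(b*x)) + 1/(1+a*x) := by
        refine (abs_sub _ _).trans (le_of_eq ?_)
        rw [abs_of_pos (Real.exp_pos _), abs_of_pos hiv]
      have t1 : Real.exp (-(b*x)) / x ≤ Real.exp (-(b*x)) := by
        rw [div_le_iff₀ hx0]
        nlinarith [Real.exp_pos (-(b*x))]
      have t2 : (1/(1+a*x))/x ≤ (1/a) * x ^ (-2:ℝ) := by
        have hx2 : x ^ (-2:ℝ) = 1 / x^2 := by
          rw [Real.rpow_neg hx0.le, show (2:ℝ) = ((2:ℕ):ℝ) by norm_num, Real.rpow_natCast,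
            one_div]
        rw [hx2, div_div, div_mul_div_comm, one_mul]
        apply one_div_le_one_div_of_le (by positivity)
        nlinarith
      calc |(Real.exp (-(b * x)) - 1 / (1 + a * x)) / x|
          = |Real.exp (-(b * x)) - 1 / (1 + a * x)| / x := by
            rw [abs_div, abs_of_pos hx0]
        _ ≤ (Real.exp (-(b*x)) + 1/(1+a*x)) / x := by gcongr
        _ = Real.exp (-(b*x))/x + (1/(1+a*x))/x := add_div _ _ _
        _ ≤ Real.exp (-(b*x)) + (1/a) * x ^ (-2:ℝ) := add_le_add t1 t2
  -- limit at infinity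
  have htop : Tendsto f atTop (𝓝 (Real.log a)) := by
    have hEtop : Tendsto (fun x => E1 (b * x)) atTop (𝓝 0) := by
      refine E1_tendsto_atTop.comp ?_
      exact (tendsto_const_mul_atTop_of_pos hb).mpr tendsto_id
    have hLtop : Tendsto (fun x => Real.log (1 + a * x) - Real.log x) atTop (𝓝 (Real.log a)) := by
      have h1 : Tendsto (fun x : ℝ => x⁻¹ + a) atTop (𝓝 (0 + a)) :=
        tendsto_inv_atTop_zero.add tendsto_const_nhds
      have h2 : Tendsto (fun x : ℝ => Real.log (x⁻¹ + a)) atTop (𝓝 (Real.log a)) := by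
        rw [show Real.log a = Real.log (0 + a) by norm_num]
        exact ((Real.continuousAt_log (by norm_num [ha.ne'])).tendsto.comp h1)
      refine h2.congr' ?_
      filter_upwards [eventually_gt_atTop (0:ℝ)] with x hx
      rw [← Real.log_div (by positivity) hx.ne']
      congr 1
      field_simp
    have := hLtop.sub hEtop
    rw [sub_zero] at this
    refine this.congr' ?_
    filter_upwards [eventually_gt_atTop (0:ℝ)] with x hx
    simp [hfdef, hg, hx.ne']
  have key := integral_Ioi_of_hasDerivAt_of_tendsto hcont hderiv hint htop
  rw [key]
  have hf0 : f 0 = Real.log b + γ := by simp [hfdef]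
  rw [hf0, Real.log_div ha.ne' hb.ne']
  ring
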